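/- A finite direct product R = ∏_{i=1}^k R_i of G-graded rings (with componentwise grading) is graded NR-clean if and only if each R_i is graded NR-clean. -/

import Mathlib

set_option linter.unusedSectionVars false

/-- An element is homogeneous w.r.t. a grading family `𝒜` if it lies in some component. -/
def Homogeneous {G : Type*} [Group G] {R : Type*} [Ring R]
    (𝒜 : G → AddSubgroup R) (x : R) : Prop := ∃ g, x ∈ 𝒜 g

/-- A graded-regular element: homogeneous `r` with `r = r * a * r` for some homogeneous `a`. -/
def GradedRegular {G : Type*} [Group G] {R : Type*} [Ring R]
    (𝒜 : G → AddSubgroup R) (r : R) : Prop :=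
  Homogeneous 𝒜 r ∧ ∃ a : R, Homogeneous 𝒜 a ∧ r = r * a * r

/-- Graded NR-clean: every homogeneous element is a sum of a graded-regular element
and a homogeneous nilpotent element. -/
def GradedNRClean {G : Type*} [Group G] {R : Type*} [Ring R]
    (𝒜 : G → AddSubgroup R) : Prop :=
  ∀ x : R, Homogeneous 𝒜 x →
    ∃ r n : R, GradedRegular 𝒜 r ∧ Homogeneous 𝒜 n ∧ IsNilpotent n ∧ x = r + n

/-- `𝒜` is a `G`-grading of the ring `R`. -/
structure IsGrading {G : Type*} [Group G] [DecidableEq G] {R : Type*} [Ring R]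
    (𝒜 : G → AddSubgroup R) : Prop where
  one_mem : (1 : R) ∈ 𝒜 1
  mul_mem : ∀ {g h : G} {a b : R}, a ∈ 𝒜 g → b ∈ 𝒜 h → a * b ∈ 𝒜 (g * h)
  isInternal : DirectSum.IsInternal 𝒜

section Aux

variable {G : Type*} [Group G] [DecidableEq G] {R : Type*} [Ring R] {𝒜 : G → AddSubgroup R}

/-- Distinct graded components intersect trivially. -/
lemma IsGrading.disj (hI : DirectSum.IsInternal 𝒜) {p q : G} (hpq : p ≠ q) {x : R}
    (hp : x ∈ 𝒜 p) (hq : x ∈ 𝒜 q) : x = 0 := by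
  have h : DirectSum.of (fun g => 𝒜 g) p ⟨x, hp⟩ = DirectSum.of (fun g => 𝒜 g) q ⟨x, hq⟩ := by
    apply hI.injective; simp
  have h2 : (DirectSum.of (fun g => 𝒜 g) p ⟨x, hp⟩) p
      = (DirectSum.of (fun g => 𝒜 g) q ⟨x, hq⟩) p := by rw [h]
  rw [DirectSum.of_eq_same, DirectSum.of_eq_of_ne q p _ hpq] at h2
  simpa using congrArg Subtype.val h2


/-- A sum of two homogeneous elements which is itself a nonzero homogeneous element of degree
`g` either has both summands of degree `g`, or one of the summands is zero. -/
lemma IsGrading.tri (hI : DirectSum.IsInternal 𝒜) {p q g : G} {u v : R}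
    (hu : u ∈ 𝒜 p) (hv : v ∈ 𝒜 q) (hx : u + v ∈ 𝒜 g) (hne : u + v ≠ 0) :
    (u ∈ 𝒜 g ∧ v ∈ 𝒜 g) ∨ u = 0 ∨ v = 0 := by
  by_cases hpq : p = q
  · subst hpq
    have hsum : u + v ∈ 𝒜 p := (𝒜 p).add_mem hu hv
    by_cases hpg : p = g
    · exact Or.inl ⟨hpg ▸ hu, hpg ▸ hv⟩
    · exact absurd (IsGrading.disj hI hpg hsum hx) hne
  · have h : DirectSum.of (fun g => 𝒜 g) p ⟨u, hu⟩ + DirectSum.of (fun g => 𝒜 g) q ⟨v, hv⟩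
        = DirectSum.of (fun g => 𝒜 g) g ⟨u + v, hx⟩ := by
      apply hI.injective; simp
    by_cases hpg : p = g
    · have hqg : q ≠ g := fun h' => hpq (hpg.trans h'.symm)
      have h2 : (DirectSum.of (fun g => 𝒜 g) p ⟨u, hu⟩ + DirectSum.of (fun g => 𝒜 g) q ⟨v, hv⟩) q
          = (DirectSum.of (fun g => 𝒜 g) g ⟨u + v, hx⟩) q := by rw [h]
      rw [DFinsupp.add_apply, DirectSum.of_eq_same, DirectSum.of_eq_of_ne p q _ (Ne.symm hpq),
        DirectSum.of_eq_of_ne g q _ hqg] at h2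
      refine Or.inr (Or.inr ?_)
      simpa using congrArg Subtype.val h2
    · have h2 : (DirectSum.of (fun g => 𝒜 g) p ⟨u, hu⟩ + DirectSum.of (fun g => 𝒜 g) q ⟨v, hv⟩) p
          = (DirectSum.of (fun g => 𝒜 g) g ⟨u + v, hx⟩) p := by rw [h]
      rw [DFinsupp.add_apply, DirectSum.of_eq_same, DirectSum.of_eq_of_ne q p _ hpq,
        DirectSum.of_eq_of_ne g p _ hpg] at h2
      refine Or.inr (Or.inl ?_)
      simpa using congrArg Subtype.val h2

/-- A degree-`g` graded-regular element admits a regularity witness of degree `g⁻¹`. -/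
lemma IsGrading.fix_a (hA : IsGrading 𝒜) {g : G} {r : R} (hr : r ∈ 𝒜 g)
    (hreg : ∃ a : R, Homogeneous 𝒜 a ∧ r = r * a * r) :
    ∃ a : R, a ∈ 𝒜 g⁻¹ ∧ r = r * a * r := by
  by_cases hr0 : r = 0
  · exact ⟨0, (𝒜 g⁻¹).zero_mem, by rw [hr0]; simp⟩
  · obtain ⟨a, ⟨h, hah⟩, hraa⟩ := hreg
    have hmem : r ∈ 𝒜 (g * h * g) := hraa ▸ hA.mul_mem (hA.mul_mem hr hah) hr
    have hg : g = g * h * g := by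
      by_contra hne
      exact hr0 (IsGrading.disj hA.isInternal hne hr hmem)
    have h1 : (1 : G) * g = (g * h) * g := by rw [one_mul]; exact hg
    have hginv : h = g⁻¹ := eq_inv_of_mul_eq_one_right (mul_right_cancel h1).symm
    exact ⟨a, hginv ▸ hah, hraa⟩

/-- In a graded NR-clean graded ring, every element of degree `g` decomposes as `r + n` with
`r, n ∈ 𝒜 g`, `n` nilpotent, and `r = r * a * r` for some `a ∈ 𝒜 g⁻¹`. -/
lemma component_decomp (hA : IsGrading 𝒜) (hC : GradedNRClean 𝒜) {g : G} {x : R}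
    (hx : x ∈ 𝒜 g) :
    ∃ r a n : R, r ∈ 𝒜 g ∧ a ∈ 𝒜 g⁻¹ ∧ r = r * a * r ∧ n ∈ 𝒜 g ∧ IsNilpotent n ∧
      x = r + n := by
  by_cases hx0 : x = 0
  · exact ⟨0, 0, 0, (𝒜 g).zero_mem, (𝒜 g⁻¹).zero_mem, by simp, (𝒜 g).zero_mem,
      ⟨1, by simp⟩, by rw [hx0]; simp⟩
  · obtain ⟨r, n, ⟨⟨p, hrp⟩, hreg⟩, ⟨q, hnq⟩, hnil, hsum⟩ := hC x ⟨g, hx⟩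
    have hx' : r + n ∈ 𝒜 g := hsum ▸ hx
    have hne : r + n ≠ 0 := hsum ▸ hx0
    rcases IsGrading.tri hA.isInternal hrp hnq hx' hne with ⟨hrg, hng⟩ | hr0 | hn0
    · obtain ⟨a, hag, hraa⟩ := hA.fix_a hrg hreg
      exact ⟨r, a, n, hrg, hag, hraa, hng, hnil, hsum⟩
    · -- r = 0, so x = n
      have hxn : x = n := by rw [hsum, hr0, zero_add]
      exact ⟨0, 0, x, (𝒜 g).zero_mem, (𝒜 g⁻¹).zero_mem, by simp, hx, hxn ▸ hnil,
        by simp⟩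
    · -- n = 0, so x = r
      have hxr : x = r := by rw [hsum, hn0, add_zero]
      have hrg : r ∈ 𝒜 g := hxr ▸ hx
      obtain ⟨a, hag, hraa⟩ := hA.fix_a hrg hreg
      exact ⟨r, a, 0, hrg, hag, hraa, (𝒜 g).zero_mem, ⟨1, by simp⟩, by rw [hxr]; simp⟩

end Aux

/-- A finite direct product of `G`-graded rings (with componentwise grading)
is graded NR-clean iff each factor is graded NR-clean. -/
theorem stmt4 {G : Type*} [Group G] [DecidableEq G] {k : ℕ} (A : Fin k → Type*)
    [∀ i, Ring (A i)] (𝒜 : ∀ i, G → AddSubgroup (A i)) (hA : ∀ i, IsGrading (𝒜 i)) :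
    GradedNRClean (fun g => AddSubgroup.pi Set.univ fun i => 𝒜 i g) ↔
      ∀ i, GradedNRClean (𝒜 i) := by
  constructor
  · intro hC i x ⟨g, hxg⟩
    have hX : ∀ j, Pi.single i x j ∈ 𝒜 j g := by
      intro j
      rcases eq_or_ne j i with rfl | hj
      · simpa using hxg
      · rw [Pi.single_eq_of_ne hj]; exact (𝒜 j g).zero_mem
    obtain ⟨r, n, ⟨⟨p, hrp⟩, a, ⟨h, hah⟩, hraa⟩, ⟨q, hnq⟩, ⟨m, hm⟩, hsum⟩ :=
      hC (Pi.single i x) ⟨g, fun j _ => hX j⟩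
    refine ⟨r i, n i, ⟨⟨p, hrp i (Set.mem_univ i)⟩, a i, ⟨h, hah i (Set.mem_univ i)⟩, ?_⟩,
      ⟨q, hnq i (Set.mem_univ i)⟩, ⟨m, ?_⟩, ?_⟩
    · have := congrFun hraa i
      simpa using this
    · have := congrFun hm i
      simpa using this
    · have := congrFun hsum i
      simpa using this
  · intro hC x ⟨g, hxg⟩
    choose r a n hr ha hraa hn hnil hxe using
      fun i => component_decomp (hA i) (hC i) (hxg i (Set.mem_univ i))
    choose m hm using hnil
    refine ⟨r, n, ⟨⟨g, fun i _ => hr i⟩, a, ⟨g⁻¹, fun i _ => ha i⟩, ?_⟩,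
      ⟨g, fun i _ => hn i⟩, ⟨Finset.univ.sup m, ?_⟩, ?_⟩
    · funext i; simpa using hraa i
    · funext i
      simp only [Pi.pow_apply, Pi.zero_apply]
      exact pow_eq_zero_of_le (Finset.le_sup (Finset.mem_univ i)) (hm i)
    · funext i; simpa using hxe i
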